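/- Let α be a type and R ⊆ FreeGroup α a set of relators. Then any two elements of the normal closure of R are connected by a finite sequence of elementary moves; that is, for all u, v ∈ Subgroup.normalClosure R, Relation.ReflTransGen step_R u v holds. -/

import Mathlib

/-- The elementary-move relation: `z` is obtained from `w` either by a
conjugation move by a generator (or its inverse), or by appending a relator
or an inverse relator on the right. -/
def StepR {α : Type*} (R : Set (FreeGroup α)) (w z : FreeGroup α) : Prop :=
  (∃ a : α, z = FreeGroup.of a * w * (FreeGroup.of a)⁻¹ ∨
    z = (FreeGroup.of a)⁻¹ * w * FreeGroup.of a) ∨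
  (∃ t : FreeGroup α, (t ∈ R ∨ t⁻¹ ∈ R) ∧ z = w * t)

lemma stepR_symm {α : Type*} {R : Set (FreeGroup α)} {w z : FreeGroup α}
    (h : StepR R w z) : StepR R z w := by
  rcases h with ⟨a, h | h⟩ | ⟨t, ht, h⟩
  · exact Or.inl ⟨a, Or.inr (by rw [h]; group)⟩
  · exact Or.inl ⟨a, Or.inl (by rw [h]; group)⟩
  · exact Or.inr ⟨t⁻¹, by rw [inv_inv]; exact ht.symm, by rw [h]; group⟩

lemma rtg_stepR_symm {α : Type*} {R : Set (FreeGroup α)} {w z : FreeGroup α}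
    (h : Relation.ReflTransGen (StepR R) w z) :
    Relation.ReflTransGen (StepR R) z w := by
  induction h with
  | refl => exact .refl
  | tail _ hs ih => exact .trans (.single (stepR_symm hs)) ih

lemma rtg_conj {α : Type*} (R : Set (FreeGroup α)) (g : FreeGroup α) :
    ∀ w, Relation.ReflTransGen (StepR R) w (g * w * g⁻¹) := by
  induction g using FreeGroup.induction_on with
  | C1 => intro w; simpa using Relation.ReflTransGen.refl
  | of a => exact fun w => .single (Or.inl ⟨a, Or.inl rfl⟩)
  | inv_of a _ => exact fun w => by rw [inv_inv]; exact .single (Or.inl ⟨a, Or.inr rfl⟩)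
  | mul x y hx hy =>
      intro w
      have : x * (y * w * y⁻¹) * x⁻¹ = x * y * w * (x * y)⁻¹ := by group
      exact ((hy w).trans (hx (y * w * y⁻¹))).trans (by rw [this])

lemma rtg_append {α : Type*} (R : Set (FreeGroup α)) {v : FreeGroup α}
    (hv : v ∈ Subgroup.normalClosure R) :
    ∀ w, Relation.ReflTransGen (StepR R) w (w * v) := by
  refine Subgroup.closure_induction (fun x hx w => ?_) (fun w => by simpa using Relation.ReflTransGen.refl)
    (fun x y _ _ hx hy w => ?_) (fun x _ hx w => ?_) hv
  · obtain ⟨r, hr, hc⟩ := Group.mem_conjugatesOfSet_iff.mp hx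
    obtain ⟨c, rfl⟩ := isConj_iff.mp hc
    have h1 : Relation.ReflTransGen (StepR R) w (c⁻¹ * w * c) := by
      simpa using rtg_conj R c⁻¹ w
    have h2 : StepR R (c⁻¹ * w * c) (c⁻¹ * w * c * r) := Or.inr ⟨r, Or.inl hr, rfl⟩
    have h3 := rtg_conj R c (c⁻¹ * w * c * r)
    rw [show c * (c⁻¹ * w * c * r) * c⁻¹ = w * (c * r * c⁻¹) by group] at h3
    exact (h1.tail h2).trans h3
  · have := (hx w).trans (hy (w * x))
    rwa [mul_assoc] at this
  · have h := hx (w * x⁻¹)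
    rw [inv_mul_cancel_right] at h
    exact rtg_stepR_symm h

/-- Any two elements of the normal closure of the relator set `R` are
connected by a finite sequence of elementary moves. -/
theorem connected_in_normal_closure {α : Type*} (R : Set (FreeGroup α)) :
    ∀ u ∈ Subgroup.normalClosure R, ∀ v ∈ Subgroup.normalClosure R,
      Relation.ReflTransGen (StepR R) u v := by
  intro u hu v hv
  have h := rtg_append R (Subgroup.mul_mem _ (Subgroup.inv_mem _ hu) hv) u
  rwa [mul_inv_cancel_left] at h
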